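/- arXiv:1605.01240 — 4 statements merged into one kernel-verified Lean document; each statement's English description precedes it below -/
import Mathlib

section
/- Let F be a finite set, let g and m be natural numbers with m ≥ 1, and let b_1, …, b_m : F → Z_2 be functions such that (i) the support of each b_i has size at least g, (ii) the support of the pointwise sum b_1 + … + b_m (computed in Z_2) has size at least g, and (iii) every element of F lies in the support of at most two of the functions b_1, …, b_m. Then g·(m + 1) ≤ 2·|F|. (This is the counting argument underlying Theorem 3 of the paper.) -/
open Finset

/-- A finite simplicial complex on a finite vertex type `V`:
a finite nonempty collection of nonempty finite sets (faces)
closed under taking nonempty subsets. -/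
structure SComplex (V : Type) [DecidableEq V] [Fintype V] where
  faces : Finset (Finset V)
  nonempty : faces.Nonempty
  no_empty : ∀ σ ∈ faces, σ ≠ ∅
  down_closed : ∀ σ ∈ faces, ∀ τ, τ ⊆ σ → τ ≠ ∅ → τ ∈ faces

namespace SComplex

variable {V : Type} [DecidableEq V] [Fintype V]

/-- The set of faces of dimension `i` (i.e. of cardinality `i+1`). -/
def facesDim (K : SComplex V) (i : ℕ) : Finset (Finset V) :=
  K.faces.filter (fun σ => σ.card = i + 1)

/-- `fnum K i` is the face number `f_i`. -/
def fnum (K : SComplex V) (i : ℕ) : ℕ := (K.facesDim i).card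

/-- The space of `Z_2` `i`-chains: functions from the `i`-faces to `Z_2`. -/
abbrev Chains (K : SComplex V) (i : ℕ) : Type := {σ // σ ∈ K.facesDim i} → ZMod 2

/-- The boundary map `∂_i : C_i → C_{i-1}` (and `∂_0 = 0`): the value of `∂ c` on an
`(i-1)`-face `τ` is the sum over `i`-faces `σ ⊇ τ` of `c σ`. -/
def boundary (K : SComplex V) (i : ℕ) : Chains K i →ₗ[ZMod 2] Chains K (i - 1) :=
  if i = 0 then 0 else
  { toFun := fun c τ =>
      ∑ σ : {σ // σ ∈ K.facesDim i}, if (τ : Finset V) ⊆ (σ : Finset V) then c σ else 0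
    map_add' := by
      intro c d
      funext τ
      show (∑ σ : {σ // σ ∈ K.facesDim i}, _) = _
      rw [Pi.add_apply, ← Finset.sum_add_distrib]
      apply Finset.sum_congr rfl
      intro σ _
      by_cases h : (τ : Finset V) ⊆ (σ : Finset V) <;> simp [h]
    map_smul' := by
      intro a c
      funext τ
      show (∑ σ : {σ // σ ∈ K.facesDim i}, _) = _
      rw [RingHom.id_apply, Pi.smul_apply, smul_eq_mul, Finset.mul_sum]
      apply Finset.sum_congr rfl
      intro σ _
      by_cases h : (τ : Finset V) ⊆ (σ : Finset V) <;> simp [h] }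

/-- The `i`-th `Z_2` Betti number: `dim ker ∂_i − rank ∂_{i+1}`. -/
noncomputable def betti (K : SComplex V) (i : ℕ) : ℕ :=
  Module.finrank (ZMod 2) (LinearMap.ker (K.boundary i)) -
    Module.finrank (ZMod 2) (LinearMap.range (K.boundary (i + 1)))

/-- The number of `i`-faces in the support of a chain. -/
def suppCard {K : SComplex V} {i : ℕ} (c : Chains K i) : ℕ :=
  (Finset.univ.filter (fun σ => c σ ≠ 0)).card

/-- The girth: the minimal support size of a nonzero `d`-cycle. -/
noncomputable def girth (K : SComplex V) (d : ℕ) : ℕ :=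
  sInf {n | ∃ c : Chains K d, c ∈ LinearMap.ker (K.boundary d) ∧ c ≠ 0 ∧ suppCard c = n}

/-- `Z_d(K)` admits an `m`-complete basis: a basis of the space of `d`-cycles such that every
`d`-face lies in the support of at most `m` basis elements. -/
def HasCompleteBasis (K : SComplex V) (d m : ℕ) : Prop :=
  ∃ (ι : Type) (_ : Fintype ι) (b : Module.Basis ι (ZMod 2) (LinearMap.ker (K.boundary d))),
    ∀ σ : {σ // σ ∈ K.facesDim d},
      (Finset.univ.filter (fun i : ι => (b i).1 σ ≠ 0)).card ≤ m

/-- `K` is `d`-dimensional: `d` is the maximal dimension of a face. -/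
def IsDim (K : SComplex V) (d : ℕ) : Prop :=
  (∀ σ ∈ K.faces, σ.card ≤ d + 1) ∧ ∃ σ ∈ K.faces, σ.card = d + 1

/-- `K` is pure `d`-dimensional: every face is contained in a `d`-face. -/
def IsPure (K : SComplex V) (d : ℕ) : Prop :=
  ∀ σ ∈ K.faces, ∃ τ ∈ K.faces, σ ⊆ τ ∧ τ.card = d + 1

/-- A `d`-dimensional complex is balanced if its vertices can be colored with `d+1` colors
so that the coloring is injective on every face. -/
def IsBalanced (K : SComplex V) (d : ℕ) : Prop :=
  ∃ coloring : V → Fin (d + 1), ∀ σ ∈ K.faces, Set.InjOn coloring (σ : Set V)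

/-- The `d`-skeleton of `K`: all faces of dimension at most `d`. -/
def skeleton (K : SComplex V) (d : ℕ) : SComplex V where
  faces := K.faces.filter (fun σ => σ.card ≤ d + 1)
  nonempty := by
    obtain ⟨σ, hσ⟩ := K.nonempty
    obtain ⟨v, hv⟩ := Finset.nonempty_iff_ne_empty.mpr (K.no_empty σ hσ)
    refine ⟨{v}, Finset.mem_filter.mpr ⟨K.down_closed σ hσ {v}
      (Finset.singleton_subset_iff.mpr hv) (Finset.singleton_ne_empty v), by simp⟩⟩
  no_empty := by
    intro σ hσ
    exact K.no_empty σ (Finset.mem_filter.mp hσ).1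
  down_closed := by
    intro σ hσ τ hτσ hτ
    rw [Finset.mem_filter] at hσ ⊢
    exact ⟨K.down_closed σ hσ.1 τ hτσ hτ, le_trans (Finset.card_le_card hτσ) hσ.2⟩

end SComplex

open SComplex
/-- the counting argument behind Theorem 3. -/
theorem counting_two_complete {F : Type} [Fintype F] [DecidableEq F] (g m : ℕ) (hm : 1 ≤ m)
    (b : Fin m → F → ZMod 2)
    (hsupp : ∀ i : Fin m, g ≤ (Finset.univ.filter (fun x : F => b i x ≠ 0)).card)
    (hsum : g ≤ (Finset.univ.filter (fun x : F => (∑ i : Fin m, b i) x ≠ 0)).card)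
    (htwo : ∀ x : F, (Finset.univ.filter (fun i : Fin m => b i x ≠ 0)).card ≤ 2) :
    g * (m + 1) ≤ 2 * Fintype.card F := by
  classical
  set t : F → ℕ := fun x => (Finset.univ.filter (fun i : Fin m => b i x ≠ 0)).card with ht
  have key : ∀ x : F, t x + (if (∑ i : Fin m, b i) x ≠ 0 then 1 else 0) ≤ 2 := by
    intro x
    by_cases h : (∑ i : Fin m, b i) x ≠ 0
    · have hsumx : (∑ i : Fin m, b i) x = ∑ i : Fin m, b i x := by
        simp [Finset.sum_apply]
      have hcast : (∑ i : Fin m, b i x) = (t x : ZMod 2) := by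
        rw [← Finset.sum_filter_ne_zero Finset.univ]
        have : ∀ i ∈ Finset.univ.filter (fun i : Fin m => b i x ≠ 0), b i x = 1 := by
          intro i hi
          have hne := (Finset.mem_filter.mp hi).2
          have : ∀ a : ZMod 2, a ≠ 0 → a = 1 := by decide
          exact this _ hne
        rw [Finset.sum_congr rfl this, Finset.sum_const, nsmul_eq_mul, mul_one]
      have hne : (t x : ZMod 2) ≠ 0 := by
        rw [← hcast, ← hsumx]; exact h
      have hle : t x ≤ 2 := htwo x
      interval_cases h' : t x
      · simp at hne
      · split <;> omega
      · exact absurd (by decide : ((2 : ℕ) : ZMod 2) = 0) hne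
    · simp only [h, if_neg, not_not, ite_false]
      simpa using htwo x
  have h1 : (∑ i : Fin m, (Finset.univ.filter (fun x : F => b i x ≠ 0)).card) = ∑ x : F, t x := by
    simp only [Finset.card_filter, ht]
    exact Finset.sum_comm
  have h2 : (Finset.univ.filter (fun x : F => (∑ i : Fin m, b i) x ≠ 0)).card
      = ∑ x : F, (if (∑ i : Fin m, b i) x ≠ 0 then 1 else 0) := by
    simp [Finset.card_filter]
  have hgm : g * m ≤ ∑ i : Fin m, (Finset.univ.filter (fun x : F => b i x ≠ 0)).card := by
    calc g * m = ∑ _i : Fin m, g := by simp [Finset.sum_const, mul_comm]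
    _ ≤ _ := Finset.sum_le_sum (fun i _ => hsupp i)
  calc g * (m + 1) = g * m + g := by ring
    _ ≤ (∑ i : Fin m, (Finset.univ.filter (fun x : F => b i x ≠ 0)).card)
        + (Finset.univ.filter (fun x : F => (∑ i : Fin m, b i) x ≠ 0)).card :=
      add_le_add hgm hsum
    _ = ∑ x : F, (t x + (if (∑ i : Fin m, b i) x ≠ 0 then 1 else 0)) := by
      rw [h1, h2, Finset.sum_add_distrib]
    _ ≤ ∑ _x : F, 2 := Finset.sum_le_sum (fun x _ => key x)
    _ = 2 * Fintype.card F := by simp [Finset.sum_const, mul_comm]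
end

section
/- Let d ≥ 0 and let S be a finite (d+1)-dimensional simplicial complex such that: every d-dimensional face of S is contained in exactly two (d+1)-dimensional faces; the space Z_{d+1}(S) of Z_2 (d+1)-cycles of S has dimension 1 (equivalently, the only nonzero (d+1)-cycle is the sum of all (d+1)-faces); and β_d(S) = 0. Then for every subcomplex Σ of S of dimension at most d, the space Z_d(Σ) of Z_2 d-cycles of Σ admits a 2-complete basis. (This is the combinatorial core of Theorem 2 of the paper; such an S is, e.g., any triangulated (d+1)-sphere.) -/
open Finset

open SComplex
section Aux

variable {V : Type} [DecidableEq V] [Fintype V]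

/-- total extension of a chain to all finsets -/
def tot (K : SComplex V) (i : ℕ) (c : Chains K i) (σ : Finset V) : ZMod 2 :=
  if h : σ ∈ K.facesDim i then c ⟨σ, h⟩ else 0

lemma tot_coe (K : SComplex V) (i : ℕ) (c : Chains K i) (σ : {σ // σ ∈ K.facesDim i}) :
    tot K i c σ.1 = c σ := by
  rw [tot, dif_pos σ.2]

lemma boundary_apply (K : SComplex V) (i : ℕ) (hi : i ≠ 0) (c : Chains K i)
    (τ : {σ // σ ∈ K.facesDim (i-1)}) :
    K.boundary i c τ = ∑ σ ∈ K.facesDim i, if (τ : Finset V) ⊆ σ then tot K i c σ else 0 := by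
  rw [SComplex.boundary, if_neg hi]
  show (∑ σ : {σ // σ ∈ K.facesDim i}, if (τ:Finset V) ⊆ σ.1 then c σ else 0) = _
  rw [← Finset.sum_coe_sort (K.facesDim i)
    (fun σ => if (τ:Finset V) ⊆ σ then tot K i c σ else 0)]
  exact Finset.sum_congr rfl fun σ _ => by rw [tot_coe]

lemma mem_facesDim {K : SComplex V} {i : ℕ} {σ : Finset V} :
    σ ∈ K.facesDim i ↔ σ ∈ K.faces ∧ σ.card = i + 1 := Finset.mem_filter

end Aux
section Main

variable {V : Type} [DecidableEq V] [Fintype V] {d : ℕ} {S : SComplex V}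

lemma cofaces (htwo : ∀ σ ∈ S.facesDim d,
      ((S.facesDim (d + 1)).filter (fun F => σ ⊆ F)).card = 2)
    {σ : Finset V} (hσ : σ ∈ S.facesDim d) :
    ∃ A B : {F // F ∈ S.facesDim (d+1)}, A ≠ B ∧ σ ⊆ A.1 ∧ σ ⊆ B.1 ∧
      (∀ G ∈ S.facesDim (d+1), σ ⊆ G → G = A.1 ∨ G = B.1) ∧
      ∀ f : Finset V → ZMod 2,
        (∑ F ∈ S.facesDim (d+1), if σ ⊆ F then f F else 0) = f A.1 + f B.1 := by
  obtain ⟨a, b, hab, hfe⟩ := Finset.card_eq_two.mp (htwo σ hσ)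
  have ha : a ∈ (S.facesDim (d+1)).filter (fun F => σ ⊆ F) := by rw [hfe]; simp
  have hb : b ∈ (S.facesDim (d+1)).filter (fun F => σ ⊆ F) := by rw [hfe]; simp
  rw [Finset.mem_filter] at ha hb
  refine ⟨⟨a, ha.1⟩, ⟨b, hb.1⟩, fun h => hab (congrArg Subtype.val h), ha.2, hb.2, ?_, ?_⟩
  · intro G hG hσG
    have : G ∈ ({a, b} : Finset (Finset V)) := by
      rw [← hfe, Finset.mem_filter]; exact ⟨hG, hσG⟩
    simpa using this
  · intro f
    rw [← Finset.sum_filter, hfe, Finset.sum_pair hab]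

lemma one_mem_ker (htwo : ∀ σ ∈ S.facesDim d,
      ((S.facesDim (d + 1)).filter (fun F => σ ⊆ F)).card = 2) :
    (fun _ => 1 : Chains S (d+1)) ∈ LinearMap.ker (S.boundary (d+1)) := by
  rw [LinearMap.mem_ker]
  funext τ
  rw [boundary_apply S (d+1) (Nat.succ_ne_zero d), Pi.zero_apply]
  have h1 : ∀ F ∈ S.facesDim (d+1),
      (if (τ : Finset V) ⊆ F then tot S (d+1) (fun _ => 1) F else 0) =
      if (τ : Finset V) ⊆ F then 1 else 0 := by
    intro F hF; rw [tot, dif_pos hF]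
  rw [Finset.sum_congr rfl h1, ← Finset.sum_filter, Finset.sum_const, htwo τ.1 τ.2]
  show (2:ℕ) • (1 : ZMod 2) = 0
  rw [nsmul_eq_mul]
  decide

lemma ker_cases (hSdim : S.IsDim (d+1))
    (htwo : ∀ σ ∈ S.facesDim d,
      ((S.facesDim (d + 1)).filter (fun F => σ ⊆ F)).card = 2)
    (hZ : Module.finrank (ZMod 2) (LinearMap.ker (S.boundary (d + 1))) = 1) :
    ∀ c ∈ LinearMap.ker (S.boundary (d+1)), c = 0 ∨ c = fun _ => 1 := by
  have ho := one_mem_ker htwo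
  have hne : (fun _ => 1 : Chains S (d+1)) ≠ 0 := by
    obtain ⟨σ, hσf, hσc⟩ := hSdim.2
    intro h
    exact one_ne_zero (congrFun h ⟨σ, mem_facesDim.mpr ⟨hσf, hσc⟩⟩)
  have hspan : Submodule.span (ZMod 2) {(fun _ => 1 : Chains S (d+1))} =
      LinearMap.ker (S.boundary (d+1)) := by
    apply Submodule.eq_of_le_of_finrank_le
    · rwa [Submodule.span_singleton_le_iff_mem]
    · rw [hZ, finrank_span_singleton hne]
  intro c hc
  rw [← hspan, Submodule.mem_span_singleton] at hc
  obtain ⟨r, rfl⟩ := hc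
  rcases (show r = 0 ∨ r = 1 by revert r; decide) with rfl | rfl
  · left; simp
  · right; simp

end Main
section Main2

variable {V : Type} [DecidableEq V] [Fintype V] {d : ℕ} {S : SComplex V}

lemma zmod2_cases : ∀ a b : ZMod 2, (a + b = 0 ↔ a = b) ∧ a + a = 0 ∧ (2:ℕ) • a = 0 := by
  decide

lemma boundary_apply' (K : SComplex V) (i : ℕ) (c : Chains K (i+1))
    (τ : {σ // σ ∈ K.facesDim i}) :
    K.boundary (i+1) c τ =
      ∑ σ ∈ K.facesDim (i+1), if (τ : Finset V) ⊆ σ then tot K (i+1) c σ else 0 :=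
  boundary_apply K (i+1) (Nat.succ_ne_zero i) c τ

lemma range_le_ker :
    LinearMap.range (S.boundary (d+1)) ≤ LinearMap.ker (S.boundary d) := by
  cases d with
  | zero =>
      have h0 : S.boundary 0 = 0 := by rw [SComplex.boundary, if_pos rfl]
      rw [h0, LinearMap.ker_zero]; exact le_top
  | succ e =>
      rintro x ⟨c, rfl⟩
      rw [LinearMap.mem_ker]
      funext τ
      rw [Pi.zero_apply]
      refine Eq.trans (boundary_apply S (e+1) (Nat.succ_ne_zero e)
        (S.boundary (e+2) c) τ) ?_
      have hstep : ∀ σ ∈ S.facesDim (e+1),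
          (if (τ:Finset V) ⊆ σ then tot S (e+1) (S.boundary (e+2) c) σ else 0) =
          ∑ F ∈ S.facesDim (e+2),
            if ((τ:Finset V) ⊆ σ ∧ σ ⊆ F) then tot S (e+2) c F else 0 := by
        intro σ hσ
        by_cases h : (τ:Finset V) ⊆ σ
        · rw [if_pos h]
          have h3 : tot S (e+1) (S.boundary (e+2) c) σ =
              ∑ F ∈ S.facesDim (e+2), if σ ⊆ F then tot S (e+2) c F else 0 :=
            (dif_pos hσ).trans (boundary_apply' S (e+1) c ⟨σ, hσ⟩)
          rw [h3]
          exact Finset.sum_congr rfl fun F _ => by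
            by_cases h2 : σ ⊆ F <;> simp [h, h2]
        · rw [if_neg h]
          exact (Finset.sum_eq_zero fun F _ => by simp [h]).symm
      rw [Finset.sum_congr rfl hstep, Finset.sum_comm]
      apply Finset.sum_eq_zero
      intro F hF
      rw [← Finset.sum_filter, Finset.sum_const]
      by_cases hτF : (τ : Finset V) ⊆ F
      · have hτc : (τ : Finset V).card = e + 1 := by
          have := (mem_facesDim.mp τ.2).2; omega
        obtain ⟨hFf, hFc⟩ := mem_facesDim.mp hF
        have himg : (S.facesDim (e+1)).filter (fun σ => (τ:Finset V) ⊆ σ ∧ σ ⊆ F) =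
            (F \ (τ:Finset V)).image (fun x => insert x (τ:Finset V)) := by
          ext σ
          simp only [Finset.mem_filter, Finset.mem_image, Finset.mem_sdiff]
          constructor
          · rintro ⟨hσm, hτσ, hσF⟩
            obtain ⟨hσf, hσc⟩ := mem_facesDim.mp hσm
            have h1 : (σ \ (τ:Finset V)).card = 1 := by
              rw [Finset.card_sdiff_of_subset hτσ, hσc, hτc]; omega
            obtain ⟨x, hx⟩ := Finset.card_eq_one.mp h1
            have hxm : x ∈ σ \ (τ:Finset V) := hx ▸ Finset.mem_singleton_self x
            rw [Finset.mem_sdiff] at hxm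
            refine ⟨x, ⟨hσF hxm.1, hxm.2⟩, ?_⟩
            rw [Finset.insert_eq, Finset.union_comm, ← hx,
              Finset.union_sdiff_of_subset hτσ]
          · rintro ⟨x, ⟨hxF, hxτ⟩, rfl⟩
            have hins : insert x (τ:Finset V) ⊆ F := Finset.insert_subset hxF hτF
            refine ⟨mem_facesDim.mpr ⟨S.down_closed F hFf _ hins
                (Finset.insert_ne_empty _ _), ?_⟩, Finset.subset_insert _ _, hins⟩
            rw [Finset.card_insert_of_notMem hxτ, hτc]

        have hinj : Set.InjOn (fun x => insert x (τ:Finset V)) ↑(F \ (τ:Finset V)) := by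
          intro x hx y hy hxy
          simp only [Finset.coe_sdiff, Set.mem_diff, Finset.mem_coe] at hx
          have hmem : x ∈ insert y (τ:Finset V) := by
            rw [show insert y (τ:Finset V) = (fun x => insert x (τ:Finset V)) y from rfl, ← hxy]
            exact Finset.mem_insert_self x _
          rcases Finset.mem_insert.mp hmem with h | h
          · exact h
          · exact absurd h hx.2
        rw [himg, Finset.card_image_of_injOn hinj, Finset.card_sdiff_of_subset hτF, hFc, hτc,
          show e + 2 + 1 - (e + 1) = 2 by omega]
        exact (zmod2_cases _ 0).2.2
      · have : (S.facesDim (e+1)).filter (fun σ => (τ:Finset V) ⊆ σ ∧ σ ⊆ F) = ∅ := by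
          rw [Finset.filter_eq_empty_iff]
          exact fun σ hσ h => hτF (h.1.trans h.2)
        rw [this, Finset.card_empty, zero_smul]

lemma range_eq_ker (hβd : S.betti d = 0) :
    LinearMap.range (S.boundary (d+1)) = LinearMap.ker (S.boundary d) := by
  have hβ : Module.finrank (ZMod 2) (LinearMap.ker (S.boundary d)) -
      Module.finrank (ZMod 2) (LinearMap.range (S.boundary (d+1))) = 0 := hβd
  exact (Submodule.eq_of_le_of_finrank_le range_le_ker (Nat.sub_eq_zero_iff_le.mp hβ))

end Main2
section QuotPart

variable {V : Type} [DecidableEq V] [Fintype V]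

/-- Two top faces are related if they share a `d`-face not in `T`. -/
def SRel (d : ℕ) (S T : SComplex V) (F G : {F // F ∈ S.facesDim (d+1)}) : Prop :=
  ∃ σ ∈ S.facesDim d, σ ∉ T.faces ∧ σ ⊆ F.1 ∧ σ ⊆ G.1

def st (d : ℕ) (S T : SComplex V) : Setoid {F // F ∈ S.facesDim (d+1)} :=
  Relation.EqvGen.setoid (SRel d S T)

def Q (d : ℕ) (S T : SComplex V) := Quotient (st d S T)

noncomputable instance (d : ℕ) (S T : SComplex V) : Fintype (Q d S T) :=
  @Quotient.fintype _ _ (st d S T) (fun _ _ => Classical.propDecidable _)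

lemma facesDim_mono {S T : SComplex V} (hsub : T.faces ⊆ S.faces) {i : ℕ} {σ : Finset V}
    (h : σ ∈ T.facesDim i) : σ ∈ S.facesDim i := by
  rw [mem_facesDim] at h ⊢; exact ⟨hsub h.1, h.2⟩

/-- lift a function on components to a top chain -/
noncomputable def laL (d : ℕ) (S T : SComplex V) :
    (Q d S T → ZMod 2) →ₗ[ZMod 2] Chains S (d+1) where
  toFun a := fun F => a (Quotient.mk (st d S T) F)
  map_add' _ _ := rfl
  map_smul' _ _ := rfl

/-- restriction of `d`-chains of `S` to `T` -/
noncomputable def resL (d : ℕ) (S T : SComplex V) (hsub : T.faces ⊆ S.faces) :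
    Chains S d →ₗ[ZMod 2] Chains T d where
  toFun c := fun σ => c ⟨σ.1, facesDim_mono hsub σ.2⟩
  map_add' _ _ := rfl
  map_smul' _ _ := rfl

open Classical in
/-- extension of `d`-chains of `T` to `S` by zero -/
noncomputable def extL (d : ℕ) (S T : SComplex V) :
    Chains T d →ₗ[ZMod 2] Chains S d where
  toFun z := fun σ => if h : σ.1 ∈ T.facesDim d then z ⟨σ.1, h⟩ else 0
  map_add' z w := by
    funext σ
    show (if h : σ.1 ∈ T.facesDim d then (z + w) ⟨σ.1, h⟩ else 0) = _
    by_cases h : σ.1 ∈ T.facesDim d <;> simp [h]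
  map_smul' r z := by
    funext σ
    show (if h : σ.1 ∈ T.facesDim d then (r • z) ⟨σ.1, h⟩ else 0) = _
    by_cases h : σ.1 ∈ T.facesDim d <;> simp [h]

open Classical in
noncomputable def extQ (d : ℕ) (S T : SComplex V) (q0 : Q d S T) :
    ({q : Q d S T // q ≠ q0} → ZMod 2) →ₗ[ZMod 2] (Q d S T → ZMod 2) where
  toFun b := fun q => if h : q = q0 then 0 else b ⟨q, h⟩
  map_add' b1 b2 := by
    funext q
    show (if h : q = q0 then 0 else (b1 + b2) ⟨q, h⟩) = _
    by_cases h : q = q0 <;> simp [h]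
  map_smul' r b := by
    funext q
    show (if h : q = q0 then 0 else (r • b) ⟨q, h⟩) = _
    by_cases h : q = q0 <;> simp [h]

variable {d : ℕ} {S T : SComplex V}

lemma boundary_val
    (htwo : ∀ σ ∈ S.facesDim d, ((S.facesDim (d + 1)).filter (fun F => σ ⊆ F)).card = 2)
    {σ : Finset V} (hσ : σ ∈ S.facesDim d) :
    ∃ A B : {F // F ∈ S.facesDim (d+1)}, A ≠ B ∧ σ ⊆ A.1 ∧ σ ⊆ B.1 ∧
      (∀ G ∈ S.facesDim (d+1), σ ⊆ G → G = A.1 ∨ G = B.1) ∧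
      ∀ c : Chains S (d+1), S.boundary (d+1) c ⟨σ, hσ⟩ = c A + c B := by
  obtain ⟨A, B, hAB, hA, hB, huniq, hsum⟩ := cofaces htwo hσ
  refine ⟨A, B, hAB, hA, hB, huniq, fun c => ?_⟩
  exact (boundary_apply' S d c ⟨σ, hσ⟩).trans
    ((hsum (tot S (d+1) c)).trans (by rw [tot_coe, tot_coe]))

lemma laB_vanish
    (htwo : ∀ σ ∈ S.facesDim d, ((S.facesDim (d + 1)).filter (fun F => σ ⊆ F)).card = 2)
    (a : Q d S T → ZMod 2) {σ : Finset V} (hσ : σ ∈ S.facesDim d) (hσT : σ ∉ T.faces) :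
    S.boundary (d+1) (laL d S T a) ⟨σ, hσ⟩ = 0 := by
  obtain ⟨A, B, _, hA, hB, _, hval⟩ := boundary_val htwo hσ
  refine (hval (laL d S T a)).trans ?_
  show a (Quotient.mk (st d S T) A) + a (Quotient.mk (st d S T) B) = 0
  have hq : Quotient.mk (st d S T) A = Quotient.mk (st d S T) B :=
    Quotient.sound (Relation.EqvGen.rel _ _ ⟨σ, hσ, hσT, hA, hB⟩)
  rw [hq]
  exact (zmod2_cases _ 0).2.1

lemma const_on_rel
    (htwo : ∀ σ ∈ S.facesDim d, ((S.facesDim (d + 1)).filter (fun F => σ ⊆ F)).card = 2)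
    {c : Chains S (d+1)}
    (hvan : ∀ (σ : Finset V) (hσ : σ ∈ S.facesDim d), σ ∉ T.faces →
      S.boundary (d+1) c ⟨σ, hσ⟩ = 0)
    {F G : {F // F ∈ S.facesDim (d+1)}} (hrel : SRel d S T F G) : c F = c G := by
  obtain ⟨σ, hσ, hσT, hF, hG⟩ := hrel
  obtain ⟨A, B, hAB, hA, hB, huniq, hval⟩ := boundary_val htwo hσ
  have h0 : c A + c B = 0 := (hval c).symm.trans (hvan σ hσ hσT)
  have hcab : c A = c B := (zmod2_cases (c A) (c B)).1.mp h0
  have e1 : c F = c A ∨ c F = c B := by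
    rcases huniq F.1 F.2 hF with h | h
    · exact Or.inl (congrArg c (Subtype.ext h))
    · exact Or.inr (congrArg c (Subtype.ext h))
  have e2 : c G = c A ∨ c G = c B := by
    rcases huniq G.1 G.2 hG with h | h
    · exact Or.inl (congrArg c (Subtype.ext h))
    · exact Or.inr (congrArg c (Subtype.ext h))
  rcases e1 with h1 | h1 <;> rcases e2 with h2 | h2 <;> simp only [h1, h2, hcab]

lemma factor {c : Chains S (d+1)}
    (hcon : ∀ F G, SRel d S T F G → c F = c G) :
    ∃ a : Q d S T → ZMod 2, laL d S T a = c := by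
  have hresp : ∀ F G, (st d S T).r F G → c F = c G := by
    intro F G h
    have h' : Relation.EqvGen (SRel d S T) F G := h
    clear h
    induction h' with
    | rel x y hxy => exact hcon x y hxy
    | refl => rfl
    | symm x y _ ih => exact ih.symm
    | trans x y z _ _ ih1 ih2 => exact ih1.trans ih2
  exact ⟨Quotient.lift c hresp, funext fun F => rfl⟩

end QuotPart
section Cycles

variable {V : Type} [DecidableEq V] [Fintype V] {d : ℕ} {S T : SComplex V}

lemma boundary_zero (K : SComplex V) : K.boundary 0 = 0 := by
  rw [SComplex.boundary, if_pos rfl]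

lemma ext_cycle (hsub : T.faces ⊆ S.faces) {z : Chains T d}
    (hz : z ∈ LinearMap.ker (T.boundary d)) :
    extL d S T z ∈ LinearMap.ker (S.boundary d) := by
  cases d with
  | zero => rw [LinearMap.mem_ker, boundary_zero]; rfl
  | succ e =>
    rw [LinearMap.mem_ker]
    funext τ
    rw [Pi.zero_apply]
    refine Eq.trans (boundary_apply S (e+1) (Nat.succ_ne_zero e) (extL (e+1) S T z) τ) ?_
    have hTS : T.facesDim (e+1) ⊆ S.facesDim (e+1) := fun σ h => facesDim_mono hsub h
    have hvan : ∀ σ ∈ S.facesDim (e+1), σ ∉ T.facesDim (e+1) →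
        (if (τ:Finset V) ⊆ σ then tot S (e+1) (extL (e+1) S T z) σ else 0) = 0 := by
      intro σ hσ hσT
      have h0 : tot S (e+1) (extL (e+1) S T z) σ = 0 := by
        rw [tot, dif_pos hσ]
        exact dif_neg hσT
      rw [h0, ite_self]
    rw [← Finset.sum_subset hTS hvan]
    by_cases hτT : (τ:Finset V) ∈ T.faces
    · have hτT' : (τ:Finset V) ∈ T.facesDim ((e+1)-1) :=
        mem_facesDim.mpr ⟨hτT, (mem_facesDim.mp τ.2).2⟩
      have hz0 : T.boundary (e+1) z ⟨τ.1, hτT'⟩ = 0 := by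
        rw [LinearMap.mem_ker.mp hz]; rfl
      refine Eq.trans ?_ ((boundary_apply T (e+1) (Nat.succ_ne_zero e) z ⟨τ.1, hτT'⟩).symm.trans hz0)
      refine Finset.sum_congr rfl fun σ hσ => ?_
      have h1 : tot S (e+1) (extL (e+1) S T z) σ = tot T (e+1) z σ := by
        rw [tot, tot, dif_pos hσ, dif_pos (hTS hσ)]
        exact dif_pos hσ
      rw [h1]
    · apply Finset.sum_eq_zero
      intro σ hσ
      rw [if_neg]
      intro hτσ
      have hτne : (τ:Finset V) ≠ ∅ := by
        have hcard := (mem_facesDim.mp τ.2).2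
        intro h; rw [h] at hcard; simp at hcard
      exact hτT (T.down_closed σ (mem_facesDim.mp hσ).1 _ hτσ hτne)

lemma res_cycle (hsub : T.faces ⊆ S.faces) {c : Chains S d}
    (hc : c ∈ LinearMap.ker (S.boundary d))
    (hvan : ∀ σ : {σ // σ ∈ S.facesDim d}, σ.1 ∉ T.faces → c σ = 0) :
    resL d S T hsub c ∈ LinearMap.ker (T.boundary d) := by
  cases d with
  | zero => rw [LinearMap.mem_ker, boundary_zero]; rfl
  | succ e =>
    rw [LinearMap.mem_ker]
    funext τ
    rw [Pi.zero_apply]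
    refine Eq.trans (boundary_apply T (e+1) (Nat.succ_ne_zero e)
      (resL (e+1) S T hsub c) τ) ?_
    have hTS : T.facesDim (e+1) ⊆ S.facesDim (e+1) := fun σ h => facesDim_mono hsub h
    have hτS : (τ:Finset V) ∈ S.facesDim ((e+1)-1) := facesDim_mono hsub τ.2
    have hkey : (0:ZMod 2) = ∑ σ ∈ S.facesDim (e+1),
        (if (τ:Finset V) ⊆ σ then tot S (e+1) c σ else 0) := by
      refine Eq.trans ?_ (boundary_apply S (e+1) (Nat.succ_ne_zero e) c ⟨τ.1, hτS⟩)
      rw [LinearMap.mem_ker.mp hc]; rfl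
    refine Eq.trans (Finset.sum_congr rfl ?_) ((Finset.sum_subset hTS ?_).trans hkey.symm)
    · intro σ hσ
      have h1 : tot T (e+1) (resL (e+1) S T hsub c) σ = tot S (e+1) c σ := by
        rw [tot, tot, dif_pos hσ, dif_pos (hTS hσ)]
        rfl
      rw [h1]
    · intro σ hσS hσT
      have hσT' : σ ∉ T.faces := fun h => hσT (mem_facesDim.mpr ⟨h, (mem_facesDim.mp hσS).2⟩)
      have h0 : tot S (e+1) c σ = 0 := by
        rw [tot, dif_pos hσS]; exact hvan ⟨σ, hσS⟩ hσT'
      rw [h0, ite_self]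

end Cycles
section PsiDef

variable {V : Type} [DecidableEq V] [Fintype V]

noncomputable def Psi (d : ℕ) (S T : SComplex V) (hsub : T.faces ⊆ S.faces)
    (htwo : ∀ σ ∈ S.facesDim d, ((S.facesDim (d + 1)).filter (fun F => σ ⊆ F)).card = 2)
    (q0 : Q d S T) :
    ({q : Q d S T // q ≠ q0} → ZMod 2) →ₗ[ZMod 2] LinearMap.ker (T.boundary d) where
  toFun b := ⟨resL d S T hsub (S.boundary (d+1) (laL d S T (extQ d S T q0 b))),
    res_cycle hsub (range_le_ker (LinearMap.mem_range_self _ _))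
      (fun σ hσT => laB_vanish htwo _ σ.2 hσT)⟩
  map_add' b1 b2 := by
    apply Subtype.ext
    show resL d S T hsub (S.boundary (d+1) (laL d S T (extQ d S T q0 (b1 + b2)))) = _
    simp only [map_add]
    rfl
  map_smul' r b := by
    apply Subtype.ext
    show resL d S T hsub (S.boundary (d+1) (laL d S T (extQ d S T q0 (r • b)))) = _
    simp only [map_smul, RingHom.id_apply]
    rfl

end PsiDef
/-- the combinatorial core of Theorem 2. -/
theorem subcomplex_hasCompleteBasis {V : Type} [DecidableEq V] [Fintype V] (d : ℕ)
    (S : SComplex V) (hSdim : S.IsDim (d + 1))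
    (htwo : ∀ σ ∈ S.facesDim d, ((S.facesDim (d + 1)).filter (fun F => σ ⊆ F)).card = 2)
    (hZ : Module.finrank (ZMod 2) (LinearMap.ker (S.boundary (d + 1))) = 1)
    (hβd : S.betti d = 0)
    (T : SComplex V) (hsub : T.faces ⊆ S.faces)
    (hdim : ∀ σ ∈ T.faces, σ.card ≤ d + 1) :
    T.HasCompleteBasis d 2 := by
  classical
  obtain ⟨F0, hF0f, hF0c⟩ := hSdim.2
  have hF0 : F0 ∈ S.facesDim (d+1) := mem_facesDim.mpr ⟨hF0f, hF0c⟩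
  set q0 : Q d S T := Quotient.mk (st d S T) ⟨F0, hF0⟩ with hq0def
  have hker := ker_cases hSdim htwo hZ
  have hrange := range_eq_ker (S := S) (d := d) hβd
  -- Injectivity of Psi
  have hinj : Function.Injective (Psi d S T hsub htwo q0) := by
    rw [injective_iff_map_eq_zero]
    intro b hb
    have hval : ∀ σ : {σ // σ ∈ S.facesDim d},
        S.boundary (d+1) (laL d S T (extQ d S T q0 b)) σ = 0 := by
      intro σ
      by_cases hσT : σ.1 ∈ T.faces
      · have hσT' : σ.1 ∈ T.facesDim d := mem_facesDim.mpr ⟨hσT, (mem_facesDim.mp σ.2).2⟩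
        have h2 := congrFun (congrArg Subtype.val hb) ⟨σ.1, hσT'⟩
        exact h2
      · exact laB_vanish htwo _ σ.2 hσT
    have hmem : laL d S T (extQ d S T q0 b) ∈ LinearMap.ker (S.boundary (d+1)) := by
      rw [LinearMap.mem_ker]
      funext σ
      rw [Pi.zero_apply]
      exact hval ⟨σ.1, σ.2⟩
    rcases hker _ hmem with h0 | h1
    · funext i
      obtain ⟨F, hF⟩ := Quotient.exists_rep i.1
      have h2 : extQ d S T q0 b i.1 = 0 := by
        rw [← hF]
        exact congrFun h0 F
      have h3 : b ⟨i.1, i.2⟩ = 0 := (dif_neg i.2).symm.trans h2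
      simpa using h3
    · exfalso
      have h2 := congrFun h1 ⟨F0, hF0⟩
      have h3 : (0 : ZMod 2) = 1 := (dif_pos rfl).symm.trans h2
      exact one_ne_zero h3.symm
  -- Surjectivity of Psi
  have hsurj : Function.Surjective (Psi d S T hsub htwo q0) := by
    rintro ⟨z, hz⟩
    have hzS : extL d S T z ∈ LinearMap.ker (S.boundary d) := ext_cycle hsub hz
    rw [← hrange] at hzS
    obtain ⟨c, hc⟩ := hzS
    have hvan : ∀ (σ : Finset V) (hσ : σ ∈ S.facesDim d), σ ∉ T.faces →
        S.boundary (d+1) c ⟨σ, hσ⟩ = 0 := by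
      intro σ hσ hσT
      have h1 : S.boundary (d+1) c ⟨σ, hσ⟩ = extL d S T z ⟨σ, hσ⟩ := congrFun hc ⟨σ, hσ⟩
      rw [h1]
      exact dif_neg (fun h => hσT (mem_facesDim.mp h).1)
    obtain ⟨a, ha⟩ := factor (fun F G hrel => const_on_rel htwo hvan hrel)
    set r := a q0 with hrdef
    set a' : Q d S T → ZMod 2 := a + fun _ => r with ha'def
    have ha'0 : a' q0 = 0 := (zmod2_cases (a q0) 0).2.1
    have hconst : S.boundary (d+1) (laL d S T (fun _ => r)) = 0 := by
      rcases (show ∀ u : ZMod 2, u = 0 ∨ u = 1 by decide) r with h | h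
      · rw [h]; exact map_zero _
      · rw [h]; exact LinearMap.mem_ker.mp (one_mem_ker htwo)
    have hBa' : S.boundary (d+1) (laL d S T a') = S.boundary (d+1) c := by
      have hsplit : laL d S T a' = laL d S T a + laL d S T (fun _ => r) := map_add _ _ _
      rw [hsplit, map_add, hconst, add_zero, ha]
    set b : {q : Q d S T // q ≠ q0} → ZMod 2 := fun i => a' i.1 with hbdef
    have hext : extQ d S T q0 b = a' := by
      funext q
      by_cases h : q = q0
      · rw [h]
        exact (dif_pos rfl).trans ha'0.symm
      · exact dif_neg h
    refine ⟨b, ?_⟩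
    apply Subtype.ext
    show resL d S T hsub (S.boundary (d+1) (laL d S T (extQ d S T q0 b))) = z
    rw [hext, hBa', hc]
    funext σ
    exact dif_pos σ.2
  -- Assembly
  set e := LinearEquiv.ofBijective (Psi d S T hsub htwo q0) ⟨hinj, hsurj⟩ with hedef
  refine ⟨{q : Q d S T // q ≠ q0}, inferInstance,
    (Pi.basisFun (ZMod 2) {q : Q d S T // q ≠ q0}).map e, ?_⟩
  intro σ
  have hσS : σ.1 ∈ S.facesDim d := facesDim_mono hsub σ.2
  obtain ⟨A, B, hAB, hA, hB, huniq, hval⟩ := boundary_val htwo hσS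
  set qA : Q d S T := Quotient.mk (st d S T) A with hqA
  set qB : Q d S T := Quotient.mk (st d S T) B with hqB
  have hsupp : ∀ i : {q : Q d S T // q ≠ q0},
      ((((Pi.basisFun (ZMod 2) {q : Q d S T // q ≠ q0}).map e) i :
        LinearMap.ker (T.boundary d)) : Chains T d) σ ≠ 0 → i.1 = qA ∨ i.1 = qB := by
    intro i hne
    by_contra hcon
    push_neg at hcon
    apply hne
    have hb1 : (((Pi.basisFun (ZMod 2) {q : Q d S T // q ≠ q0}).map e) i :
        LinearMap.ker (T.boundary d)) = Psi d S T hsub htwo q0 (Pi.single i 1) := by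
      rw [Module.Basis.map_apply, Pi.basisFun_apply]
      rfl
    rw [hb1]
    show S.boundary (d+1) (laL d S T (extQ d S T q0 (Pi.single i 1)))
      ⟨σ.1, facesDim_mono hsub σ.2⟩ = 0
    have hv := hval (laL d S T (extQ d S T q0 (Pi.single i 1)))
    refine Eq.trans hv ?_
    show extQ d S T q0 (Pi.single i 1) qA + extQ d S T q0 (Pi.single i 1) qB = 0
    have hzA : extQ d S T q0 (Pi.single i 1) qA = 0 := by
      by_cases h : qA = q0
      · exact dif_pos h
      · refine (dif_neg h).trans ?_
        exact Pi.single_eq_of_ne (fun hh => hcon.1 (congrArg Subtype.val hh).symm) 1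
    have hzB : extQ d S T q0 (Pi.single i 1) qB = 0 := by
      by_cases h : qB = q0
      · exact dif_pos h
      · refine (dif_neg h).trans ?_
        exact Pi.single_eq_of_ne (fun hh => hcon.2 (congrArg Subtype.val hh).symm) 1
    rw [hzA, hzB, add_zero]
  refine le_trans (Finset.card_le_card_of_injOn (fun i => i.1) ?_ ?_)
    (Finset.card_le_two (a := qA) (b := qB))
  · intro i hi
    show i.1 ∈ ({qA, qB} : Finset (Q d S T))
    rcases hsupp i (Finset.mem_filter.mp hi).2 with h | h
    · rw [h]; exact Finset.mem_insert_self _ _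
    · rw [h]; exact Finset.mem_insert_of_mem (Finset.mem_singleton_self _)
  · intro x _ y _ hxy
    exact Subtype.ext hxy
end

section
/- (Theorem 3) Let Σ be a finite d-dimensional simplicial complex with β_d(Σ) ≥ 1 such that the space Z_d(Σ) of Z_2 d-cycles admits a 2-complete basis. Then g(Σ)·(β_d(Σ) + 1) ≤ 2·f_d(Σ), where g(Σ) is the girth of Σ. -/
open Finset

open SComplex
/-- Theorem 3. -/
theorem girth_betti_ineq {V : Type} [DecidableEq V] [Fintype V] (d : ℕ)
    (K : SComplex V) (hdim : K.IsDim d)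
    (hβ : 1 ≤ K.betti d) (hcb : K.HasCompleteBasis d 2) :
    K.girth d * (K.betti d + 1) ≤ 2 * K.fnum d := by
  classical
  obtain ⟨ι, hι, b, hb⟩ := hcb
  -- The (d+1)-faces are empty since K is d-dimensional
  have hempty : IsEmpty {σ // σ ∈ K.facesDim (d+1)} := by
    constructor
    rintro ⟨σ, hσ⟩
    rw [facesDim, Finset.mem_filter] at hσ
    have := hdim.1 σ hσ.1
    omega
  have hbd0 : K.boundary (d+1) = 0 := by
    have hsub : Subsingleton (Chains K (d+1)) :=
      ⟨fun a b => funext fun σ => hempty.elim σ⟩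
    apply LinearMap.ext
    intro c
    rw [Subsingleton.elim c 0, map_zero]
    rfl
  have hbetti : K.betti d = Fintype.card ι := by
    rw [betti, hbd0, LinearMap.range_zero, finrank_bot, Nat.sub_zero,
      Module.finrank_eq_card_basis b]
  -- girth is at most suppCard of any nonzero cycle
  have hg : ∀ c : Chains K d, c ∈ LinearMap.ker (K.boundary d) → c ≠ 0 →
      K.girth d ≤ suppCard c := by
    intro c hmem hne
    exact Nat.sInf_le ⟨c, hmem, hne, rfl⟩
  set s : LinearMap.ker (K.boundary d) := ∑ i, b i with hs
  have hscoe : ∀ σ, (s : Chains K d) σ = ∑ i, ((b i : Chains K d)) σ := by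
    intro σ
    rw [hs, AddSubmonoidClass.coe_finset_sum]
    exact Finset.sum_apply σ _ _
  -- key pointwise bound
  have key : ∀ σ : {σ // σ ∈ K.facesDim d},
      (Finset.univ.filter (fun i : ι => (b i : Chains K d) σ ≠ 0)).card +
        (if (s : Chains K d) σ ≠ 0 then 1 else 0) ≤ 2 := by
    intro σ
    have h2 := hb σ
    by_cases hsσ : (s : Chains K d) σ = 0
    · simpa [hsσ] using h2
    · have hval : (s : Chains K d) σ =
          ((Finset.univ.filter (fun i : ι => (b i : Chains K d) σ ≠ 0)).card : ZMod 2) := by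
        rw [hscoe σ, ← Finset.sum_filter_ne_zero]
        have hone : ∀ i ∈ Finset.univ.filter (fun i : ι => (b i : Chains K d) σ ≠ 0),
            (b i : Chains K d) σ = 1 := by
          intro i hi
          have hx : ∀ x : ZMod 2, x ≠ 0 → x = 1 := by decide
          exact hx _ (Finset.mem_filter.mp hi).2
        rw [Finset.sum_congr rfl hone]
        simp
      set k := (Finset.univ.filter (fun i : ι => (b i : Chains K d) σ ≠ 0)).card with hk
      have hkle : k ≤ 2 := h2
      interval_cases k
      · rw [hval] at hsσ; simp at hsσ
      · split <;> omega
      · rw [hval] at hsσ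
        exact absurd (by decide : ((2:ℕ) : ZMod 2) = 0) hsσ
  -- sum over faces
  have hsum : (∑ i, suppCard (b i : Chains K d)) + suppCard (s : Chains K d)
      ≤ 2 * K.fnum d := by
    have h1 : ∀ i : ι, suppCard (b i : Chains K d) =
        ∑ σ : {σ // σ ∈ K.facesDim d},
          (if (b i : Chains K d) σ ≠ 0 then 1 else 0) := by
      intro i; rw [suppCard, Finset.card_filter]
    have h2 : suppCard (s : Chains K d) =
        ∑ σ : {σ // σ ∈ K.facesDim d},
          (if (s : Chains K d) σ ≠ 0 then 1 else 0) := by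
      rw [suppCard, Finset.card_filter]
    rw [h2, Finset.sum_congr rfl (fun i _ => h1 i), Finset.sum_comm,
      ← Finset.sum_add_distrib]
    have hbound : ∑ σ : {σ // σ ∈ K.facesDim d},
        ((∑ i, if (b i : Chains K d) σ ≠ 0 then 1 else 0) +
          (if (s : Chains K d) σ ≠ 0 then 1 else 0)) ≤
        ∑ _σ : {σ // σ ∈ K.facesDim d}, 2 := by
      apply Finset.sum_le_sum
      intro σ _
      have hkey := key σ
      rwa [Finset.card_filter] at hkey
    refine hbound.trans ?_
    rw [Finset.sum_const, Finset.card_univ, Fintype.card_coe, smul_eq_mul, mul_comm]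
    exact le_rfl
  -- each basis element is a nonzero cycle
  have hbne : ∀ i, (b i : Chains K d) ≠ 0 := by
    intro i
    have h0 : b i ≠ 0 := b.ne_zero i
    simpa using h0
  -- s is nonzero
  have hcard : 1 ≤ Fintype.card ι := by rw [hbetti] at hβ; exact hβ
  obtain ⟨i0⟩ := Fintype.card_pos_iff.mp hcard
  have hsne : (s : Chains K d) ≠ 0 := by
    have hrepr : (b.repr s) i0 = 1 := by
      rw [hs, map_sum]
      rw [Finsupp.finset_sum_apply]
      have hterm : ∀ i : ι, (b.repr (b i)) i0 = if i = i0 then 1 else 0 := by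
        intro i
        rw [b.repr_self, Finsupp.single_apply]
      rw [Finset.sum_congr rfl (fun i _ => hterm i)]
      simp
    intro hcontra
    have : s = 0 := Subtype.ext hcontra
    rw [this] at hrepr
    simp at hrepr
  -- assemble
  have hmemb : ∀ i : ι, (b i : Chains K d) ∈ LinearMap.ker (K.boundary d) := fun i => (b i).2
  have hmems : (s : Chains K d) ∈ LinearMap.ker (K.boundary d) := s.2
  calc K.girth d * (K.betti d + 1)
      = (∑ _i : ι, K.girth d) + K.girth d := by
        rw [hbetti, mul_add, mul_one, Finset.sum_const, Finset.card_univ, smul_eq_mul,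
          mul_comm]
    _ ≤ (∑ i, suppCard (b i : Chains K d)) + suppCard (s : Chains K d) := by
        exact Nat.add_le_add
          (Finset.sum_le_sum fun i _ => hg _ (hmemb i) (hbne i))
          (hg _ hmems hsne)
    _ ≤ 2 * K.fnum d := hsum
end

section
/- (Theorem 4) Let Σ be a finite d-dimensional simplicial complex with β_d(Σ) ≥ 1 such that the space Z_d(Σ) of Z_2 d-cycles admits a 2-complete basis (by Theorem 2 of the paper, this holds whenever Σ is PL embeddable into ℝ^{d+1}), and let g = g(Σ) be its girth. Then for every odd k with 1 ≤ k ≤ d, the inequality (g − 2)·f_d(Σ) ≤ g·( Σ_{i=1}^{k} (−1)^{i−1}·(f_{d−i}(Σ) − β_{d−i}(Σ)) − 1 ) holds (as an inequality of integers). -/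
open Finset

namespace SComplex

variable {V : Type} [DecidableEq V] [Fintype V]

lemma boundary_apply (K : SComplex V) (i : ℕ) (hi : i ≠ 0) (c : Chains K i)
    (τ : {τ // τ ∈ K.facesDim (i - 1)}) :
    K.boundary i c τ =
      ∑ σ : {σ // σ ∈ K.facesDim i}, if (τ : Finset V) ⊆ (σ : Finset V) then c σ else 0 := by
  rw [boundary, if_neg hi]
  rfl

lemma card_between_even (K : SComplex V) (m : ℕ)
    (τ : {τ // τ ∈ K.facesDim m}) (σ : {σ // σ ∈ K.facesDim (m + 2)}) :
    Even (Finset.univ.filter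
      (fun ρ : {ρ // ρ ∈ K.facesDim (m + 1)} =>
        (τ : Finset V) ⊆ (ρ : Finset V) ∧ (ρ : Finset V) ⊆ (σ : Finset V))).card := by
  have hτ : (τ : Finset V).card = m + 1 := (Finset.mem_filter.mp τ.2).2
  have hσf : (σ : Finset V) ∈ K.faces := (Finset.mem_filter.mp σ.2).1
  have hσ : (σ : Finset V).card = m + 3 := (Finset.mem_filter.mp σ.2).2
  set S := (K.facesDim (m + 1)).filter
      (fun ρ => (τ : Finset V) ⊆ ρ ∧ ρ ⊆ (σ : Finset V)) with hS
  have hcard1 : (Finset.univ.filter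
      (fun ρ : {ρ // ρ ∈ K.facesDim (m + 1)} =>
        (τ : Finset V) ⊆ (ρ : Finset V) ∧ (ρ : Finset V) ⊆ (σ : Finset V))).card = S.card := by
    apply Finset.card_bij (fun ρ _ => ρ.1)
    · intro ρ hρ
      exact Finset.mem_filter.mpr ⟨ρ.2, (Finset.mem_filter.mp hρ).2⟩
    · intro a _ b _ h
      exact Subtype.ext h
    · intro ρ hρ
      obtain ⟨h1, h2⟩ := Finset.mem_filter.mp hρ
      exact ⟨⟨ρ, h1⟩, by simp only [Finset.mem_filter, Finset.mem_univ, true_and]; exact h2, rfl⟩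
  rw [hcard1]
  by_cases hts : (τ : Finset V) ⊆ (σ : Finset V)
  · have hcard : S.card = ((σ : Finset V) \ (τ : Finset V)).card := by
      symm
      apply Finset.card_bij (fun x _ => insert x (τ : Finset V))
      · intro x hx
        have hxσ : x ∈ (σ : Finset V) := (Finset.mem_sdiff.mp hx).1
        have hxτ : x ∉ (τ : Finset V) := (Finset.mem_sdiff.mp hx).2
        refine Finset.mem_filter.mpr ⟨Finset.mem_filter.mpr
          ⟨K.down_closed _ hσf _ (Finset.insert_subset hxσ hts) (Finset.insert_ne_empty _ _),
           by rw [Finset.card_insert_of_notMem hxτ, hτ]⟩,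
          Finset.subset_insert _ _, Finset.insert_subset hxσ hts⟩
      · intro x hx y hy h
        have hxτ : x ∉ (τ : Finset V) := (Finset.mem_sdiff.mp hx).2
        have : x ∈ insert y (τ : Finset V) := h ▸ Finset.mem_insert_self x _
        rcases Finset.mem_insert.mp this with h' | h'
        · exact h'
        · exact absurd h' hxτ
      · intro ρ hρ
        obtain ⟨hρm, hτρ, hρσ⟩ := Finset.mem_filter.mp hρ
        have hρc : ρ.card = m + 2 := (Finset.mem_filter.mp hρm).2
        have h1 : (ρ \ (τ : Finset V)).card = 1 := by
          rw [Finset.card_sdiff_of_subset hτρ, hρc, hτ]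
          omega
        obtain ⟨x, hx⟩ := Finset.card_eq_one.mp h1
        have hxρ : x ∈ ρ \ (τ : Finset V) := hx ▸ Finset.mem_singleton_self x
        refine ⟨x, Finset.mem_sdiff.mpr
          ⟨hρσ (Finset.mem_sdiff.mp hxρ).1, (Finset.mem_sdiff.mp hxρ).2⟩, ?_⟩
        rw [Finset.insert_eq, ← hx, Finset.sdiff_union_of_subset hτρ]
    rw [hcard, Finset.card_sdiff_of_subset hts, hσ, hτ]
    exact ⟨1, by omega⟩
  · have : S = ∅ := by
      rw [Finset.filter_eq_empty_iff]
      rintro ρ _ ⟨h1, h2⟩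
      exact hts (h1.trans h2)
    rw [this]
    exact Even.zero

lemma sq_zero (K : SComplex V) (j : ℕ) :
    LinearMap.range (K.boundary (j + 1)) ≤ LinearMap.ker (K.boundary j) := by
  rcases Nat.eq_zero_or_pos j with rfl | hj
  · intro x _
    simp [boundary, LinearMap.mem_ker]
  obtain ⟨m, rfl⟩ : ∃ m, j = m + 1 := ⟨j - 1, by omega⟩
  rintro x ⟨c, rfl⟩
  rw [LinearMap.mem_ker]
  funext τ
  refine Eq.trans (boundary_apply K (m + 1) (by omega) _ τ) ?_
  have hb : ∀ ρ : {ρ // ρ ∈ K.facesDim (m + 1)},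
      K.boundary (m + 2) c ρ =
        ∑ σ : {σ // σ ∈ K.facesDim (m + 2)},
          if (ρ : Finset V) ⊆ (σ : Finset V) then c σ else 0 :=
    fun ρ => boundary_apply K (m + 2) (by omega) c ρ
  rw [show (0 : Chains K (m + 1 - 1)) τ = 0 from rfl]
  calc (∑ ρ : {ρ // ρ ∈ K.facesDim (m + 1)}, if (τ : Finset V) ⊆ (ρ : Finset V) then
          K.boundary (m + 2) c ρ else 0)
      = ∑ ρ : {ρ // ρ ∈ K.facesDim (m + 1)}, ∑ σ : {σ // σ ∈ K.facesDim (m + 2)},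
          if (τ : Finset V) ⊆ (ρ : Finset V) ∧ (ρ : Finset V) ⊆ (σ : Finset V) then c σ else 0 := by
        apply Finset.sum_congr rfl
        intro ρ _
        rw [hb ρ]
        by_cases h : (τ : Finset V) ⊆ (ρ : Finset V)
        · rw [if_pos h]
          exact Finset.sum_congr rfl fun σ _ => by
            by_cases h2 : (ρ : Finset V) ⊆ (σ : Finset V) <;> simp [h, h2]
        · rw [if_neg h]
          exact (Finset.sum_eq_zero fun σ _ => by simp [h]).symm
    _ = ∑ σ : {σ // σ ∈ K.facesDim (m + 2)}, ∑ ρ : {ρ // ρ ∈ K.facesDim (m + 1)},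
          if (τ : Finset V) ⊆ (ρ : Finset V) ∧ (ρ : Finset V) ⊆ (σ : Finset V) then c σ else 0 :=
        Finset.sum_comm
    _ = 0 := by
        apply Finset.sum_eq_zero
        intro σ _
        rw [← Finset.sum_filter, Finset.sum_const]
        suffices h : ∀ n : ℕ, Even n → ∀ x : ZMod 2, n • x = 0 by
          refine h _ ?_ _
          convert K.card_between_even m τ σ using 3
          exact congrArg (fun i => @Finset.univ _ i) (Subsingleton.elim _ _)
        intro n hn x
        obtain ⟨r, hr⟩ := hn
        rw [hr, add_smul, CharTwo.add_self_eq_zero]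

end SComplex
namespace SComplex

variable {V : Type} [DecidableEq V] [Fintype V]

lemma finrank_chains (K : SComplex V) (j : ℕ) :
    Module.finrank (ZMod 2) (Chains K j) = K.fnum j := by
  rw [Module.finrank_fintype_fun_eq_card, Fintype.card_coe, fnum]

lemma rank_add_ker (K : SComplex V) (j : ℕ) :
    Module.finrank (ZMod 2) (LinearMap.range (K.boundary j)) +
      Module.finrank (ZMod 2) (LinearMap.ker (K.boundary j)) = K.fnum j := by
  rw [LinearMap.finrank_range_add_finrank_ker, finrank_chains]

lemma rank_le_ker (K : SComplex V) (j : ℕ) :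
    Module.finrank (ZMod 2) (LinearMap.range (K.boundary (j + 1))) ≤
      Module.finrank (ZMod 2) (LinearMap.ker (K.boundary j)) :=
  Submodule.finrank_mono (K.sq_zero j)

lemma betti_cast (K : SComplex V) (j : ℕ) :
    (K.betti j : ℤ) = (Module.finrank (ZMod 2) (LinearMap.ker (K.boundary j)) : ℤ) -
      (Module.finrank (ZMod 2) (LinearMap.range (K.boundary (j + 1))) : ℤ) := by
  have := K.rank_le_ker j
  rw [betti]
  omega

lemma key_ineq (K : SComplex V) (d : ℕ)
    (hZ : 1 ≤ Module.finrank (ZMod 2) (LinearMap.ker (K.boundary d)))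
    (hcb : K.HasCompleteBasis d 2) :
    K.girth d * (Module.finrank (ZMod 2) (LinearMap.ker (K.boundary d)) + 1) ≤ 2 * K.fnum d := by
  obtain ⟨ι, hι, b, hbc⟩ := hcb
  have hn : Fintype.card ι = Module.finrank (ZMod 2) (LinearMap.ker (K.boundary d)) :=
    (Module.finrank_eq_card_basis b).symm
  have hne : Nonempty ι := by
    rw [← Fintype.card_pos_iff, hn]
    omega
  set z : LinearMap.ker (K.boundary d) := ∑ i : ι, b i with hz
  have hzne : z ≠ 0 := by
    intro h
    have := Fintype.linearIndependent_iff.mp b.linearIndependent (fun _ => (1 : ZMod 2))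
      (by simpa using h) hne.some
    simp at this
  -- girth lower bounds
  have hg : ∀ c : Chains K d, c ∈ LinearMap.ker (K.boundary d) → c ≠ 0 →
      K.girth d ≤ suppCard c := fun c h1 h2 => Nat.sInf_le ⟨c, h1, h2, rfl⟩
  have hgz : K.girth d ≤ suppCard (z : Chains K d) := by
    refine hg _ z.2 ?_
    intro h
    exact hzne (Subtype.ext h)
  have hgb : ∀ i : ι, K.girth d ≤ suppCard ((b i : Chains K d)) := by
    intro i
    refine hg _ (b i).2 ?_
    intro h
    exact b.ne_zero i (Subtype.ext h)
  -- pointwise bound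
  have hpt : ∀ σ : {σ // σ ∈ K.facesDim d},
      (Finset.univ.filter (fun i : ι => (b i : Chains K d) σ ≠ 0)).card +
        (if (z : Chains K d) σ ≠ 0 then 1 else 0) ≤ 2 := by
    intro σ
    have h2 : (Finset.univ.filter (fun i : ι => (b i : Chains K d) σ ≠ 0)).card ≤ 2 := by
      have h2' := hbc σ
      convert h2' using 3
    by_cases hzσ : (z : Chains K d) σ ≠ 0
    · rw [if_pos hzσ]
      have hzval : (z : Chains K d) σ =
          ((Finset.univ.filter (fun i : ι => (b i : Chains K d) σ ≠ 0)).card : ZMod 2) := by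
        have e1 : (z : Chains K d) σ = ∑ i : ι, (b i : Chains K d) σ := by
          rw [hz, AddSubmonoidClass.coe_finset_sum, Finset.sum_apply]
        rw [e1, ← Finset.sum_filter_ne_zero]
        rw [Finset.sum_congr rfl (fun i hi => show (b i : Chains K d) σ = 1 by
          have := (Finset.mem_filter.mp hi).2
          revert this
          generalize (b i : Chains K d) σ = x
          revert x
          decide)]
        rw [Finset.sum_const, nsmul_eq_mul, mul_one]
      have hodd : ¬ (2 ∣ (Finset.univ.filter (fun i : ι => (b i : Chains K d) σ ≠ 0)).card) := by
        intro hdvd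
        apply hzσ
        rw [hzval, (ZMod.natCast_eq_zero_iff _ 2).mpr hdvd]
      omega
    · rw [if_neg hzσ]
      omega
  -- sum it up
  have hsum : (∑ i : ι, suppCard ((b i : Chains K d))) + suppCard (z : Chains K d)
      ≤ 2 * K.fnum d := by
    have e2 : ∀ c : Chains K d, suppCard c =
        ∑ σ : {σ // σ ∈ K.facesDim d}, (if c σ ≠ 0 then 1 else 0) := by
      intro c
      rw [suppCard, Finset.card_filter]
    have e3 : (∑ i : ι, suppCard ((b i : Chains K d))) =
        ∑ σ : {σ // σ ∈ K.facesDim d},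
          (Finset.univ.filter (fun i : ι => (b i : Chains K d) σ ≠ 0)).card := by
      rw [Finset.sum_congr rfl (fun i _ => e2 _), Finset.sum_comm]
      exact Finset.sum_congr rfl (fun σ _ => (Finset.card_filter _ _).symm)
    rw [e3, e2, ← Finset.sum_add_distrib]
    calc (∑ σ : {σ // σ ∈ K.facesDim d},
          ((Finset.univ.filter (fun i : ι => (b i : Chains K d) σ ≠ 0)).card +
            (if (z : Chains K d) σ ≠ 0 then 1 else 0)))
        ≤ ∑ _σ : {σ // σ ∈ K.facesDim d}, 2 := Finset.sum_le_sum (fun σ _ => hpt σ)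
      _ = 2 * K.fnum d := by
          rw [Finset.sum_const, Finset.card_univ, Fintype.card_coe, smul_eq_mul, mul_comm, fnum]
  calc K.girth d * (Module.finrank (ZMod 2) (LinearMap.ker (K.boundary d)) + 1)
      = (∑ _i : ι, K.girth d) + K.girth d := by
        rw [Finset.sum_const, Finset.card_univ, hn, smul_eq_mul]
        ring
    _ ≤ (∑ i : ι, suppCard ((b i : Chains K d))) + suppCard (z : Chains K d) :=
        add_le_add (Finset.sum_le_sum fun i _ => hgb i) hgz
    _ ≤ 2 * K.fnum d := hsum

end SComplex
lemma telescope_aux (F : ℕ → ℤ) (k : ℕ) (hk : 1 ≤ k) :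
    ∑ i ∈ Finset.Icc 1 k, (-1 : ℤ) ^ (i - 1) * (F i + F (i - 1)) =
      F 0 + (-1 : ℤ) ^ (k - 1) * F k := by
  induction k with
  | zero => omega
  | succ n ih =>
    rcases Nat.eq_zero_or_pos n with rfl | hn
    · simp
      ring
    · rw [Finset.sum_Icc_succ_top (by omega : 1 ≤ n + 1), ih hn]
      obtain ⟨m, rfl⟩ : ∃ m, n = m + 1 := ⟨n - 1, by omega⟩
      show F 0 + (-1:ℤ) ^ m * F (m + 1) + (-1:ℤ) ^ (m + 1) * (F (m + 2) + F (m + 1)) =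
        F 0 + (-1:ℤ) ^ (m + 1) * F (m + 2)
      rw [pow_succ]
      ring

open SComplex
set_option maxHeartbeats 1000000 in
/-- Theorem 4. -/
theorem thm4 {V : Type} [DecidableEq V] [Fintype V] (d : ℕ)
    (K : SComplex V) (hdim : K.IsDim d)
    (hβ : 1 ≤ K.betti d) (hcb : K.HasCompleteBasis d 2)
    (k : ℕ) (hodd : Odd k) (hk1 : 1 ≤ k) (hkd : k ≤ d) :
    ((K.girth d : ℤ) - 2) * (K.fnum d : ℤ) ≤
      (K.girth d : ℤ) *
        ((∑ i ∈ Finset.Icc 1 k,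
            (-1 : ℤ) ^ (i - 1) * ((K.fnum (d - i) : ℤ) - (K.betti (d - i) : ℤ))) - 1) := by
  have hZ1 : 1 ≤ Module.finrank (ZMod 2) (LinearMap.ker (K.boundary d)) := by
    have h := hβ
    rw [betti] at h
    omega
  have hkey := K.key_ineq d hZ1 hcb
  have hsum : (∑ i ∈ Finset.Icc 1 k,
        (-1 : ℤ) ^ (i - 1) * ((K.fnum (d - i) : ℤ) - (K.betti (d - i) : ℤ)))
      = (Module.finrank (ZMod 2) (LinearMap.range (K.boundary (d - 0))) : ℤ)
        + (Module.finrank (ZMod 2) (LinearMap.range (K.boundary (d - k))) : ℤ) := by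
    calc (∑ i ∈ Finset.Icc 1 k,
          (-1 : ℤ) ^ (i - 1) * ((K.fnum (d - i) : ℤ) - (K.betti (d - i) : ℤ)))
        = ∑ i ∈ Finset.Icc 1 k, (-1 : ℤ) ^ (i - 1) *
            ((Module.finrank (ZMod 2) (LinearMap.range (K.boundary (d - i))) : ℤ)
              + (Module.finrank (ZMod 2) (LinearMap.range (K.boundary (d - (i - 1)))) : ℤ)) := by
          apply Finset.sum_congr rfl
          intro i hi
          obtain ⟨h1, h2⟩ := Finset.mem_Icc.mp hi
          have e1 := K.rank_add_ker (d - i)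
          have e2 := K.betti_cast (d - i)
          have e3 : d - (i - 1) = (d - i) + 1 := by omega
          congr 1
          rw [e2, e3]
          omega
      _ = (Module.finrank (ZMod 2) (LinearMap.range (K.boundary (d - 0))) : ℤ)
            + (-1 : ℤ) ^ (k - 1) *
              (Module.finrank (ZMod 2) (LinearMap.range (K.boundary (d - k))) : ℤ) :=
          telescope_aux (fun j =>
            (Module.finrank (ZMod 2) (LinearMap.range (K.boundary (d - j))) : ℤ)) k hk1
      _ = _ := by
          rw [(Nat.Odd.sub_odd hodd odd_one).neg_one_pow, one_mul]
  rw [hsum, Nat.sub_zero]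
  have hAZ := K.rank_add_ker d
  have hAZ' : (Module.finrank (ZMod 2) (LinearMap.range (K.boundary d)) : ℤ)
      + (Module.finrank (ZMod 2) (LinearMap.ker (K.boundary d)) : ℤ) = (K.fnum d : ℤ) := by
    exact_mod_cast hAZ
  have hR : (Module.finrank (ZMod 2) (LinearMap.range (K.boundary d)) : ℤ)
      = (K.fnum d : ℤ) - (Module.finrank (ZMod 2) (LinearMap.ker (K.boundary d)) : ℤ) := by
    omega
  rw [hR]
  have hkey' : (K.girth d : ℤ) *
      ((Module.finrank (ZMod 2) (LinearMap.ker (K.boundary d)) : ℤ) + 1)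
      ≤ 2 * (K.fnum d : ℤ) := by exact_mod_cast hkey
  have hg0 : (0 : ℤ) ≤ (K.girth d : ℤ) := Int.natCast_nonneg _
  have hB : (0 : ℤ) ≤ (Module.finrank (ZMod 2) (LinearMap.range (K.boundary (d - k))) : ℤ) :=
    Int.natCast_nonneg _
  nlinarith [hkey', mul_nonneg hg0 hB]
end
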